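/- (Hrušák–Meza–et al.) Let I be a tall ideal on ℕ containing all finite sets. Then I admits a countable splitting family if and only if conv ≤_K I. -/

import Mathlib

open Set Filter Topology

def IsIdeal {X : Type*} (I : Set (Set X)) : Prop :=
  ∅ ∈ I ∧ (Set.univ : Set X) ∉ I ∧ (∀ A B : Set X, A ∈ I → B ∈ I → A ∪ B ∈ I) ∧
    ∀ A B : Set X, A ⊆ B → B ∈ I → A ∈ I

def ContainsFin {X : Type*} (I : Set (Set X)) : Prop := ∀ A : Set X, A.Finite → A ∈ I

def Tall (I : Set (Set ℕ)) : Prop :=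
  ∀ A : Set ℕ, A.Infinite → ∃ B ⊆ A, B.Infinite ∧ B ∈ I

/-- Katětov order. -/
def KatetovLE {X Y : Type*} (I : Set (Set X)) (J : Set (Set Y)) : Prop :=
  ∃ f : Y → X, ∀ E ∈ I, f ⁻¹' E ∈ J

/-- The ideal `conv` on `ℚ ∩ [0,1]`: sets whose set of accumulation points in `ℝ`
is finite. -/
def convIdeal : Set (Set ↥(Set.Icc (0 : ℚ) 1)) :=
  {A : Set ↥(Set.Icc (0 : ℚ) 1) |
    {x : ℝ | AccPt x (Filter.principal
      ((fun q : ↥(Set.Icc (0 : ℚ) 1) => ((q : ℚ) : ℝ)) '' A))}.Finite}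

/-- `𝒳` is a countable splitting family for `I`. -/
def CountSplitting (I : Set (Set ℕ)) : Prop :=
  ∃ 𝒳 : Set (Set ℕ), 𝒳.Countable ∧ (∀ X ∈ 𝒳, X.Infinite) ∧
    ∀ Y : Set ℕ, Y ∉ I → ∃ X ∈ 𝒳, (X ∩ Y).Infinite ∧ (Y \ X).Infinite

open Classical in
noncomputable def dig (e : ℕ → Set ℕ) (k n : ℕ) : ℚ := if n ∈ e k then (1/3:ℚ)^(k+1) else 0

noncomputable def qv (e : ℕ → Set ℕ) (n : ℕ) : ℚ :=
  (∑ k ∈ Finset.range n, dig e k n) + (1/3:ℚ)^(n+2)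

lemma sc_geom_eq {K : Type*} [Field K] [LinearOrder K] [IsStrictOrderedRing K] (a n : ℕ) (h : a ≤ n) :
    ∑ k ∈ Finset.Ico a n, ((1:K)/3)^(k+1) = (1/2)*((1/3)^a - (1/3)^n) := by
  induction n, h using Nat.le_induction with
  | base => simp
  | succ n hn ih => rw [Finset.sum_Ico_succ_top hn, ih]; ring

lemma sc_geom_le {K : Type*} [Field K] [LinearOrder K] [IsStrictOrderedRing K] (a n : ℕ) :
    ∑ k ∈ Finset.Ico a n, ((1:K)/3)^(k+1) ≤ (1/2)*(1/3)^a := by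
  rcases le_or_gt a n with h | h
  · rw [sc_geom_eq a n h]
    have h1 : (0:K) ≤ (1/3)^n := by positivity
    have h2 : (0:K) ≤ (1/3)^a := by positivity
    nlinarith
  · rw [Finset.Ico_eq_empty (by omega)]
    simp only [Finset.sum_empty]
    positivity

lemma dig_nonneg (e : ℕ → Set ℕ) (k n : ℕ) : 0 ≤ dig e k n := by
  unfold dig; split <;> positivity

lemma dig_le (e : ℕ → Set ℕ) (k n : ℕ) : dig e k n ≤ (1/3:ℚ)^(k+1) := by
  unfold dig; split
  · exact le_refl _
  · positivity

lemma qv_nonneg (e : ℕ → Set ℕ) (n : ℕ) : 0 ≤ qv e n := by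
  unfold qv
  have h1 : 0 ≤ ∑ k ∈ Finset.range n, dig e k n :=
    Finset.sum_nonneg fun k _ => dig_nonneg e k n
  have h2 : (0:ℚ) < (1/3)^(n+2) := by positivity
  linarith

lemma qv_le_one (e : ℕ → Set ℕ) (n : ℕ) : qv e n ≤ 1 := by
  unfold qv
  have h1 : ∑ k ∈ Finset.range n, dig e k n ≤ (1/2:ℚ)*(1/3)^0 := by
    calc ∑ k ∈ Finset.range n, dig e k n ≤ ∑ k ∈ Finset.range n, ((1:ℚ)/3)^(k+1) :=
          Finset.sum_le_sum fun k _ => dig_le e k n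
      _ ≤ (1/2)*(1/3)^0 := by rw [Finset.range_eq_Ico]; exact sc_geom_le 0 n
  have h2 : ((1:ℚ)/3)^(n+2) ≤ (1/3)^2 :=
    _root_.pow_le_pow_of_le_one (by norm_num) (by norm_num) (by omega)
  norm_num at h1 h2 ⊢
  linarith

open Classical in
noncomputable def mv (e : ℕ → Set ℕ) (n : ℕ) : ℕ :=
  ∑ k ∈ Finset.range n, (if n ∈ e k then 3^(n+1-k) else 0)

lemma mv_cast (e : ℕ → Set ℕ) (n : ℕ) : qv e n * 3^(n+2) = (mv e n : ℚ) + 1 := by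
  classical
  unfold qv mv
  push_cast
  rw [add_mul, Finset.sum_mul]
  congr 1
  · apply Finset.sum_congr rfl
    intro k hk
    rw [Finset.mem_range] at hk
    unfold dig
    split_ifs with h
    · have hpow : (3:ℚ)^(n+2) = 3^(k+1) * 3^(n+1-k) := by
        rw [← pow_add]; congr 1; omega
      rw [hpow]
      field_simp
      rw [← mul_pow]; norm_num
    · simp
  · field_simp
    rw [← mul_pow]; norm_num

lemma mv_dvd (e : ℕ → Set ℕ) (n : ℕ) : 3 ∣ mv e n := by
  classical
  unfold mv
  apply Finset.dvd_sum
  intro k hk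
  rw [Finset.mem_range] at hk
  split_ifs
  · exact dvd_pow_self 3 (by omega)
  · exact dvd_zero 3

lemma qv_injective (e : ℕ → Set ℕ) : Function.Injective (qv e) := by
  have main : ∀ m n : ℕ, m < n → qv e m = qv e n → False := by
    intro m n hmn h
    have h1 : ((mv e n : ℚ) + 1) = ((mv e m : ℚ) + 1) * 3^(n-m) := by
      rw [← mv_cast, ← mv_cast, ← h, mul_assoc, ← pow_add]
      congr 2
      omega
    have h2 : mv e n + 1 = (mv e m + 1) * 3^(n-m) := by exact_mod_cast h1
    obtain ⟨s, hs⟩ := mv_dvd e n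
    obtain ⟨t, ht⟩ := dvd_pow_self 3 (show n - m ≠ 0 by omega)
    have h5 : mv e n + 1 = 3 * ((mv e m + 1) * t) := by rw [h2, ht]; ring
    omega
  intro m n h
  by_contra hne
  rcases lt_or_gt_of_ne hne with hlt | hlt
  · exact main m n hlt h
  · exact main n m hlt h.symm

noncomputable def pv (b : ℕ → Bool) (m : ℕ) : ℝ :=
  ∑ k ∈ Finset.range m, (if b k then (1/3:ℝ)^(k+1) else 0)

open Classical in
lemma qv_cast (e : ℕ → Set ℕ) (n : ℕ) : ((qv e n : ℚ) : ℝ) =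
    (∑ k ∈ Finset.range n, (if n ∈ e k then (1/3:ℝ)^(k+1) else 0)) + (1/3:ℝ)^(n+2) := by
  unfold qv dig
  push_cast
  congr 1
  apply Finset.sum_congr rfl
  intro k _
  split_ifs <;> push_cast <;> norm_num

lemma pv_succ (b : ℕ → Bool) (k : ℕ) :
    pv b (k+1) = pv b k + (if b k then (1/3:ℝ)^(k+1) else 0) := Finset.sum_range_succ _ _

lemma pv_bound (b : ℕ → Bool) (m m' : ℕ) (h : m ≤ m') :
    pv b m' ≤ pv b m + (1/2)*(1/3:ℝ)^m := by
  unfold pv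
  rw [Finset.range_eq_Ico,
    ← Finset.sum_Ico_consecutive _ (Nat.zero_le m) h]
  rw [← Finset.range_eq_Ico]
  have h1 : ∑ k ∈ Finset.Ico m m', (if b k then (1/3:ℝ)^(k+1) else 0)
      ≤ ∑ k ∈ Finset.Ico m m', ((1:ℝ)/3)^(k+1) := by
    apply Finset.sum_le_sum
    intro k _
    split_ifs
    · exact le_refl _
    · positivity
  have h2 := sc_geom_le (K := ℝ) m m'
  linarith

lemma sum_ite_nonneg (b : ℕ → Bool) (s : Finset ℕ) :
    0 ≤ ∑ k ∈ s, (if b k then (1/3:ℝ)^(k+1) else 0) := by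
  apply Finset.sum_nonneg
  intro k _
  split_ifs
  · positivity
  · exact le_refl _

open Classical in
lemma key1 (e : ℕ → Set ℕ) (b : ℕ → Bool) (m n : ℕ) (hmn : m ≤ n)
    (hag : ∀ k, k < m → (n ∈ e k ↔ b k = true)) :
    pv b m ≤ ((qv e n : ℚ) : ℝ) ∧ ((qv e n : ℚ) : ℝ) ≤ pv b m + (11/18) * (1/3:ℝ)^m := by
  rw [qv_cast]
  have hsplit : (∑ k ∈ Finset.range n, (if n ∈ e k then (1/3:ℝ)^(k+1) else 0))
      = (∑ k ∈ Finset.range m, (if n ∈ e k then (1/3:ℝ)^(k+1) else 0))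
        + ∑ k ∈ Finset.Ico m n, (if n ∈ e k then (1/3:ℝ)^(k+1) else 0) := by
    rw [Finset.range_eq_Ico,
      ← Finset.sum_Ico_consecutive _ (Nat.zero_le m) hmn]
    rw [← Finset.range_eq_Ico]
  have hfirst : ∑ k ∈ Finset.range m, (if n ∈ e k then (1/3:ℝ)^(k+1) else 0) = pv b m := by
    apply Finset.sum_congr rfl
    intro k hk
    rw [Finset.mem_range] at hk
    by_cases h : n ∈ e k
    · rw [if_pos h, if_pos ((hag k hk).1 h)]
    · rw [if_neg h, if_neg (fun hb => h ((hag k hk).2 hb))]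
  have hsecond1 : 0 ≤ ∑ k ∈ Finset.Ico m n, (if n ∈ e k then (1/3:ℝ)^(k+1) else 0) := by
    apply Finset.sum_nonneg; intro k _; split_ifs
    · positivity
    · exact le_refl _
  have hsecond2 : ∑ k ∈ Finset.Ico m n, (if n ∈ e k then (1/3:ℝ)^(k+1) else 0)
      ≤ (1/2)*(1/3:ℝ)^m := by
    refine le_trans (Finset.sum_le_sum fun k _ => ?_) (sc_geom_le m n)
    split_ifs
    · exact le_refl _
    · positivity
  have htail1 : (0:ℝ) < (1/3)^(n+2) := by positivity
  have htail2 : ((1:ℝ)/3)^(n+2) ≤ (1/9)*(1/3)^m := by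
    have : ((1:ℝ)/3)^(n+2) ≤ (1/3)^(m+2) :=
      _root_.pow_le_pow_of_le_one (by norm_num) (by norm_num) (by omega)
    have heq : ((1:ℝ)/3)^(m+2) = (1/9)*(1/3)^m := by rw [pow_add]; ring
    linarith
  rw [hsplit, hfirst]
  constructor <;> linarith

open Classical in
lemma key2 (e : ℕ → Set ℕ) (b : ℕ → Bool) (k n : ℕ) (hkn : k < n)
    (hag : ∀ i, i < k → (n ∈ e i ↔ b i = true)) :
    (n ∈ e k → pv b k + (1/3:ℝ)^(k+1) ≤ ((qv e n : ℚ) : ℝ)) ∧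
    (n ∉ e k → ((qv e n : ℚ) : ℝ) ≤ pv b k + (11/18) * (1/3:ℝ)^(k+1)) := by
  rw [qv_cast]
  have hsplit : (∑ i ∈ Finset.range n, (if n ∈ e i then (1/3:ℝ)^(i+1) else 0))
      = ((∑ i ∈ Finset.range k, (if n ∈ e i then (1/3:ℝ)^(i+1) else 0))
        + (if n ∈ e k then (1/3:ℝ)^(k+1) else 0))
        + ∑ i ∈ Finset.Ico (k+1) n, (if n ∈ e i then (1/3:ℝ)^(i+1) else 0) := by
    rw [Finset.range_eq_Ico,
      ← Finset.sum_Ico_consecutive _ (Nat.zero_le (k+1)) (by omega : k+1 ≤ n)]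
    congr 1
    rw [← Finset.range_eq_Ico, Finset.sum_range_succ]
  have hfirst : ∑ i ∈ Finset.range k, (if n ∈ e i then (1/3:ℝ)^(i+1) else 0) = pv b k := by
    apply Finset.sum_congr rfl
    intro i hi
    rw [Finset.mem_range] at hi
    by_cases h : n ∈ e i
    · rw [if_pos h, if_pos ((hag i hi).1 h)]
    · rw [if_neg h, if_neg (fun hb => h ((hag i hi).2 hb))]
  have hrest1 : 0 ≤ ∑ i ∈ Finset.Ico (k+1) n, (if n ∈ e i then (1/3:ℝ)^(i+1) else 0) := by
    apply Finset.sum_nonneg; intro i _; split_ifs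
    · positivity
    · exact le_refl _
  have hrest2 : ∑ i ∈ Finset.Ico (k+1) n, (if n ∈ e i then (1/3:ℝ)^(i+1) else 0)
      ≤ (1/2)*(1/3:ℝ)^(k+1) := by
    refine le_trans (Finset.sum_le_sum fun i _ => ?_) (sc_geom_le (k+1) n)
    split_ifs
    · exact le_refl _
    · positivity
  have htail1 : (0:ℝ) < (1/3)^(n+2) := by positivity
  have htail2 : ((1:ℝ)/3)^(n+2) ≤ (1/9)*(1/3)^(k+1) := by
    have : ((1:ℝ)/3)^(n+2) ≤ (1/3)^(k+3) :=
      _root_.pow_le_pow_of_le_one (by norm_num) (by norm_num) (by omega)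
    have heq : ((1:ℝ)/3)^(k+3) = (1/9)*(1/3)^(k+1) := by rw [pow_add, pow_add]; ring
    linarith
  rw [hsplit, hfirst]
  constructor
  · intro hmem
    rw [if_pos hmem]
    linarith
  · intro hmem
    rw [if_neg hmem]
    linarith


abbrev QI := ↥(Set.Icc (0 : ℚ) 1)

noncomputable def toR : QI → ℝ := fun q => ((q : ℚ) : ℝ)

lemma toR_inj : Function.Injective toR := by
  intro a b h
  have h' : ((a : ℚ) : ℝ) = ((b : ℚ) : ℝ) := h
  exact Subtype.ext (by exact_mod_cast h')

lemma toR_mem (q : QI) : toR q ∈ Set.Icc (0:ℝ) 1 := by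
  obtain ⟨hq1, hq2⟩ := q.2
  constructor
  · show (0:ℝ) ≤ ((q : ℚ) : ℝ)
    exact_mod_cast hq1
  · show ((q : ℚ) : ℝ) ≤ 1
    exact_mod_cast hq2

lemma not_accPt_of_finite {S : Set ℝ} (h : S.Finite) (x : ℝ) : ¬ AccPt x (𝓟 S) := by
  intro hx
  rw [accPt_iff_nhds] at hx
  obtain ⟨y, ⟨hyU, hyS⟩, hyx⟩ := hx ((S \ {x})ᶜ)
    (((h.subset diff_subset).isClosed).isOpen_compl.mem_nhds (by simp))
  exact hyU ⟨hyS, hyx⟩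

lemma accPt_inter_of_nhds {S U : Set ℝ} {x : ℝ} (h : AccPt x (𝓟 S)) (hU : U ∈ 𝓝 x) :
    AccPt x (𝓟 (S ∩ U)) := by
  rw [accPt_iff_nhds] at h ⊢
  intro V hV
  obtain ⟨y, ⟨hy1, hy2⟩, hy3⟩ := h (V ∩ U) (inter_mem hV hU)
  exact ⟨y, ⟨hy1.1, hy2, hy1.2⟩, hy3⟩

lemma accPt_mono {x : ℝ} {S T : Set ℝ} (h : AccPt x (𝓟 S)) (hST : S ⊆ T) : AccPt x (𝓟 T) :=
  h.mono (principal_mono.2 hST)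

theorem main_lemma
    (I : Set (Set ℕ)) (hI : IsIdeal I) (hfin : ContainsFin I)
    (e : ℕ → Set ℕ)
    (hsplit : ∀ Y : Set ℕ, Y ∉ I → ∃ j, (e j ∩ Y).Infinite ∧ (Y \ e j).Infinite)
    (f : ℕ → QI) (hfval : ∀ n, toR (f n) = ((qv e n : ℚ) : ℝ))
    (B : Set QI) (x₀ : ℝ)
    (hacc : ∀ z : ℝ, AccPt z (𝓟 (toR '' B)) → z = x₀) :
    f ⁻¹' B ∈ I := by
  classical
  by_contra hY
  set Y := f ⁻¹' B with hYdef
  have hfInj : Function.Injective (toR ∘ f) := by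
    intro a b h
    simp only [Function.comp, hfval] at h
    exact qv_injective e (by exact_mod_cast h)
  -- ultrafilter
  have hne : ∀ E : Set ℕ, E ∈ I → (Y \ E).Nonempty := by
    intro E hE
    rw [Set.nonempty_iff_ne_empty]
    intro h0
    exact hY (hI.2.2.2 Y E (Set.diff_eq_empty.mp h0) hE)
  haveI : Nonempty {E : Set ℕ // E ∈ I} := ⟨⟨∅, hI.1⟩⟩
  set F : Filter ℕ := ⨅ E : {E : Set ℕ // E ∈ I}, 𝓟 (Y \ E.1) with hFdef
  have hdir : Directed (· ≥ ·) (fun E : {E : Set ℕ // E ∈ I} => 𝓟 (Y \ E.1)) := by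
    intro E1 E2
    exact ⟨⟨E1.1 ∪ E2.1, hI.2.2.1 _ _ E1.2 E2.2⟩,
      principal_mono.2 (Set.diff_subset_diff_right Set.subset_union_left),
      principal_mono.2 (Set.diff_subset_diff_right Set.subset_union_right)⟩
  haveI hFne : F.NeBot :=
    iInf_neBot_of_directed' hdir (fun E => principal_neBot_iff.2 (hne E.1 E.2))
  obtain ⟨U, hU⟩ := Ultrafilter.exists_le F
  have hmemU : ∀ E : Set ℕ, E ∈ I → Y \ E ∈ U := by
    intro E hE
    exact le_principal_iff.mp (hU.trans (iInf_le (fun E : {E : Set ℕ // E ∈ I} => 𝓟 (Y \ E.1)) ⟨E, hE⟩))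
  have hYU : Y ∈ U := by
    have := hmemU ∅ hI.1
    rwa [Set.diff_empty] at this
  have hposU : ∀ S : Set ℕ, S ∈ U → S ∉ I := by
    intro S hS hSI
    obtain ⟨n, hn1, hn2⟩ := Filter.nonempty_of_mem (inter_mem hS (hmemU S hSI))
    exact hn2.2 hn1
  have hinfU : ∀ S : Set ℕ, S ∈ U → S.Infinite := by
    intro S hS
    by_contra h
    rw [Set.not_infinite] at h
    exact hposU S hS (hfin S h)
  -- the branch
  set b : ℕ → Bool := fun k => if e k ∈ U then true else false with hbdef
  have hbU : ∀ k, b k = true ↔ e k ∈ U := by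
    intro k
    by_cases h : e k ∈ U <;> simp [hbdef, h]
  set Z : ℕ → Set ℕ := fun m => {n | n ∈ Y ∧ ∀ k, k < m → (n ∈ e k ↔ b k = true)} with hZdef
  have hZU : ∀ m, Z m ∈ U := by
    intro m
    have hSk : ∀ k, {n : ℕ | n ∈ e k ↔ b k = true} ∈ U := by
      intro k
      by_cases h : e k ∈ U
      · exact Filter.mem_of_superset h (fun n hn => by simp [hbU, h, hn])
      · have hc : (e k)ᶜ ∈ U := Ultrafilter.compl_mem_iff_notMem.2 h
        exact Filter.mem_of_superset hc (fun n hn => by simp [hbU, h]; exact hn)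
    have hInter : (⋂ k ∈ Finset.range m, {n : ℕ | n ∈ e k ↔ b k = true}) ∈ U :=
      (Filter.biInter_finset_mem _).2 (fun k _ => hSk k)
    refine Filter.mem_of_superset (inter_mem hYU hInter) ?_
    rintro n ⟨hnY, hnI⟩
    simp only [Set.mem_iInter] at hnI
    exact ⟨hnY, fun k hk => hnI k (Finset.mem_range.2 hk)⟩
  have hZinf : ∀ m, (Z m).Infinite := fun m => hinfU _ (hZU m)
  -- location of x₀
  have hx₀ : ∀ m, pv b m ≤ x₀ ∧ x₀ ≤ pv b m + (1/3:ℝ)^m := by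
    intro m
    set T := (toR ∘ f) '' (Z m ∩ Set.Ici m) with hTdef
    have hTinf : T.Infinite := by
      apply Set.Infinite.image (hfInj.injOn)
      have : Z m ∩ Set.Ici m = Z m \ Set.Iio m := by
        ext n; simp [Set.mem_Ici, Set.mem_Iio, not_lt]
      rw [this]
      exact (hZinf m).diff (Set.finite_Iio m)
    have hTsub : T ⊆ Set.Icc (pv b m) (pv b m + (11/18)*(1/3:ℝ)^m) := by
      rintro t ⟨n, ⟨hnZ, hnm⟩, rfl⟩
      simp only [Function.comp, hfval]
      exact ⟨(key1 e b m n hnm hnZ.2).1, (key1 e b m n hnm hnZ.2).2⟩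
    obtain ⟨z, hzI, hzA⟩ := hTinf.exists_accPt_of_subset_isCompact isCompact_Icc hTsub
    have hzB : z = x₀ := by
      apply hacc
      apply accPt_mono hzA
      rintro t ⟨n, hn, rfl⟩
      exact ⟨f n, hn.1.1, rfl⟩
    subst hzB
    have h1 : (0:ℝ) ≤ (1/3)^m := by positivity
    exact ⟨hzI.1, by nlinarith [hzI.2]⟩
  -- splitting gives a deviation
  obtain ⟨j, hj1, hj2⟩ := hsplit Y hY
  have hW : ∃ W : Set ℕ, W.Infinite ∧ W ⊆ Y ∧ ∀ n ∈ W, ¬(n ∈ e j ↔ b j = true) := by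
    cases hbj : b j with
    | true =>
      exact ⟨Y \ e j, hj2, Set.diff_subset, fun n hn hiff => hn.2 (hiff.2 rfl)⟩
    | false =>
      refine ⟨e j ∩ Y, hj1, Set.inter_subset_right, fun n hn hiff => ?_⟩
      exact Bool.false_ne_true (hiff.1 hn.1)
  obtain ⟨W, hWinf, hWY, hWdev⟩ := hW
  set Dev : ℕ → Set ℕ := fun k => {n | n ∈ Y ∧ j < n ∧ (∀ i, i < k → (n ∈ e i ↔ b i = true))
    ∧ ¬(n ∈ e k ↔ b k = true)} with hDevdef
  have hcover : W ∩ Set.Ioi j ⊆ ⋃ k ∈ Finset.range (j+1), Dev k := by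
    rintro n ⟨hnW, hnj⟩
    have hex : ∃ k, ¬(n ∈ e k ↔ b k = true) := ⟨j, hWdev n hnW⟩
    have hk : ¬(n ∈ e (Nat.find hex) ↔ b (Nat.find hex) = true) := Nat.find_spec hex
    have hkmin : ∀ i, i < Nat.find hex → (n ∈ e i ↔ b i = true) :=
      fun i hi => of_not_not (Nat.find_min hex hi)
    have hkj : Nat.find hex ≤ j := Nat.find_le (hWdev n hnW)
    exact Set.mem_biUnion (Finset.mem_range.2 (by omega)) ⟨hWY hnW, hnj, hkmin, hk⟩
  have hDev : ∃ k, k ≤ j ∧ (Dev k).Infinite := by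
    by_contra h
    push_neg at h
    have hfin' : (W ∩ Set.Ioi j).Finite := by
      refine Set.Finite.subset (Set.Finite.biUnion (Finset.range (j+1)).finite_toSet
        (fun k hk => ?_)) hcover
      rw [Finset.mem_coe, Finset.mem_range] at hk
      have := h k (by omega)
      exact this
    have : (W ∩ Set.Ioi j).Infinite := by
      have heq : W ∩ Set.Ioi j = W \ Set.Iic j := by
        ext n; simp [Set.mem_Ioi, Set.mem_Iic, not_le]
      rw [heq]
      exact hWinf.diff (Set.finite_Iic j)
    exact this hfin'
  obtain ⟨k, hkj, hDevInf⟩ := hDev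
  set δ := (7/18) * (1/3:ℝ)^(k+1) with hδdef
  have hδ : 0 < δ := by positivity
  have hfar : ∀ n ∈ Dev k, δ ≤ |((qv e n : ℚ) : ℝ) - x₀| := by
    rintro n ⟨hnY, hnj, hagree, hdev⟩
    have hkn : k < n := by omega
    cases hbk : b k with
    | false =>
      have hmem : n ∈ e k := by
        by_contra hmem
        exact hdev (by rw [hbk]; simp [hmem])
      have hup : x₀ ≤ pv b k + (1/2)*(1/3:ℝ)^(k+1) := by
        by_contra hlt
        push_neg at hlt
        have hε : 0 < x₀ - (pv b k + (1/2)*(1/3:ℝ)^(k+1)) := by linarith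
        obtain ⟨m₀, hm₀⟩ := exists_pow_lt_of_lt_one hε (by norm_num : (1/3:ℝ) < 1)
        set m := max m₀ (k+1) with hmdef
        have h1 : x₀ ≤ pv b m + (1/3:ℝ)^m := (hx₀ m).2
        have h2 : pv b m ≤ pv b (k+1) + (1/2)*(1/3:ℝ)^(k+1) :=
          pv_bound b (k+1) m (le_max_right _ _)
        have h3 : pv b (k+1) = pv b k := by rw [pv_succ, hbk]; simp
        have h4 : ((1:ℝ)/3)^m ≤ (1/3)^m₀ :=
          _root_.pow_le_pow_of_le_one (by norm_num) (by norm_num) (le_max_left _ _)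
        linarith
      have hlow : pv b k + (1/3:ℝ)^(k+1) ≤ ((qv e n : ℚ) : ℝ) :=
        (key2 e b k n hkn hagree).1 hmem
      rw [abs_sub_comm, abs_of_nonpos (by linarith)]
      simp only [neg_sub]
      linarith
    | true =>
      have hmem : n ∉ e k := by
        intro hmem
        exact hdev (by rw [hbk]; simp [hmem])
      have hlow : pv b k + (1/3:ℝ)^(k+1) ≤ x₀ := by
        have h1 := (hx₀ (k+1)).1
        rw [pv_succ, hbk] at h1
        simpa using h1
      have hup : ((qv e n : ℚ) : ℝ) ≤ pv b k + (11/18) * (1/3:ℝ)^(k+1) :=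
        (key2 e b k n hkn hagree).2 hmem
      rw [abs_of_nonpos (by linarith)]
      linarith
  -- second accumulation point : contradiction
  set T := (toR ∘ f) '' (Dev k) with hTdef
  have hTinf : T.Infinite := hDevInf.image (hfInj.injOn)
  have hTsub : T ⊆ Set.Icc (0:ℝ) 1 := by
    rintro t ⟨n, _, rfl⟩
    exact toR_mem (f n)
  obtain ⟨y, _, hyA⟩ := hTinf.exists_accPt_of_subset_isCompact isCompact_Icc hTsub
  have hyx : y = x₀ := by
    apply hacc
    apply accPt_mono hyA
    rintro t ⟨n, hn, rfl⟩
    exact ⟨f n, hn.1, rfl⟩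
  have hTC : T ⊆ {t : ℝ | δ ≤ |t - x₀|} := by
    rintro t ⟨n, hn, rfl⟩
    simp only [Function.comp, hfval, Set.mem_setOf_eq]
    exact hfar n hn
  have hyC : y ∈ {t : ℝ | δ ≤ |t - x₀|} := by
    have hcl : y ∈ closure T := mem_closure_iff_clusterPt.2 (hyA.clusterPt)
    have hC : IsClosed {t : ℝ | δ ≤ |t - x₀|} :=
      isClosed_le continuous_const ((continuous_id.sub continuous_const).abs)
    exact hC.closure_subset_iff.2 hTC hcl
  rw [hyx] at hyC
  simp only [Set.mem_setOf_eq, sub_self, abs_zero] at hyC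
  linarith


lemma sep_of_finite (x : ℝ) (G : Set ℝ) (hG : G.Finite) :
    ∃ ρ : ℝ, 0 < ρ ∧ ∀ z ∈ G, z ≠ x → ρ < |z - x| := by
  refine Set.Finite.induction_on
    (motive := fun G _ => ∃ ρ : ℝ, 0 < ρ ∧ ∀ z ∈ G, z ≠ x → ρ < |z - x|) G hG ?_ ?_
  · exact ⟨1, one_pos, fun z hz => absurd hz (Set.notMem_empty z)⟩
  · intro a s ha hs ih
    obtain ⟨ρ, hρ, hρ'⟩ := ih
    by_cases hax : a = x
    · refine ⟨ρ, hρ, fun z hz hzx => ?_⟩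
      rcases hz with rfl | hz
      · exact absurd hax hzx
      · exact hρ' z hz hzx
    · have hpos : 0 < |a - x| := abs_pos.2 (sub_ne_zero.2 hax)
      refine ⟨min ρ (|a - x|/2), lt_min hρ (by linarith), fun z hz hzx => ?_⟩
      rcases hz with rfl | hz
      · exact lt_of_le_of_lt (min_le_right _ _) (by linarith)
      · exact lt_of_le_of_lt (min_le_left _ _) (hρ' z hz hzx)

lemma ideal_biUnion {α : Type*} (I : Set (Set ℕ)) (hI : IsIdeal I)
    (G : Set α) (hG : G.Finite) (S : α → Set ℕ) (h : ∀ x ∈ G, S x ∈ I) :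
    (⋃ x ∈ G, S x) ∈ I := by
  revert h
  refine Set.Finite.induction_on
    (motive := fun G _ => (∀ x ∈ G, S x ∈ I) → (⋃ x ∈ G, S x) ∈ I) G hG ?_ ?_
  · intro _
    simpa using hI.1
  · intro a s ha hs ih h
    rw [Set.biUnion_insert]
    exact hI.2.2.1 _ _ (h a (Set.mem_insert a s))
      (ih (fun x hx => h x (Set.mem_insert_of_mem a hx)))

theorem splitting_to_katetov (I : Set (Set ℕ)) (hI : IsIdeal I) (hfin : ContainsFin I)
    (h : CountSplitting I) : KatetovLE convIdeal I := by
  classical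
  obtain ⟨𝒳, hcnt, hXinf, hsplit⟩ := h
  have hXne : 𝒳.Nonempty := by
    rcases Set.eq_empty_or_nonempty 𝒳 with h0 | h0
    · obtain ⟨X, hX, -⟩ := hsplit Set.univ hI.2.1
      rw [h0] at hX
      exact absurd hX (Set.notMem_empty X)
    · exact h0
  obtain ⟨e, he⟩ := Set.Countable.exists_eq_range hcnt hXne
  have hsplit' : ∀ Y : Set ℕ, Y ∉ I → ∃ j, (e j ∩ Y).Infinite ∧ (Y \ e j).Infinite := by
    intro Y hY
    obtain ⟨X, hX, h1, h2⟩ := hsplit Y hY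
    rw [he] at hX
    obtain ⟨j, rfl⟩ := hX
    exact ⟨j, h1, h2⟩
  set f : ℕ → QI := fun n => ⟨qv e n, qv_nonneg e n, qv_le_one e n⟩ with hfdef
  have hfval : ∀ n, toR (f n) = ((qv e n : ℚ) : ℝ) := fun n => rfl
  refine ⟨f, ?_⟩
  intro A hA
  set S : Set ℝ := toR '' A with hSdef
  have hS : {x : ℝ | AccPt x (𝓟 S)}.Finite := hA
  set Fa : Set ℝ := {x : ℝ | AccPt x (𝓟 S)} with hFadef
  have hsep : ∀ x : ℝ, ∃ ρ : ℝ, 0 < ρ ∧ ∀ z ∈ Fa, z ≠ x → ρ < |z - x| :=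
    fun x => sep_of_finite x Fa hS
  choose ρ hρpos hρ using hsep
  set Ax : ℝ → Set QI := fun x => {a ∈ A | |toR a - x| ≤ ρ x} with hAxdef
  have hAxI : ∀ x : ℝ, f ⁻¹' (Ax x) ∈ I := by
    intro x
    apply main_lemma I hI hfin e hsplit' f hfval (Ax x) x
    intro z hz
    have hz1 : z ∈ Fa := accPt_mono hz (Set.image_mono (Set.sep_subset _ _))
    have hz2 : |z - x| ≤ ρ x := by
      have hcl : z ∈ closure (toR '' (Ax x)) :=
        mem_closure_iff_clusterPt.2 (hz.clusterPt)
      have hsub : toR '' (Ax x) ⊆ {t : ℝ | |t - x| ≤ ρ x} := by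
        rintro t ⟨a, ha, rfl⟩
        exact ha.2
      have hC : IsClosed {t : ℝ | |t - x| ≤ ρ x} :=
        isClosed_le ((continuous_id.sub continuous_const).abs) continuous_const
      exact hC.closure_subset_iff.2 hsub hcl
    by_contra hzx
    exact absurd hz2 (not_le.2 (hρ x z hz1 hzx))
  set Rest : Set QI := A \ ⋃ x ∈ Fa, Ax x with hRestdef
  have hRestFin : Rest.Finite := by
    by_contra hinf
    have hinf' : Rest.Infinite := hinf
    have himg : (toR '' Rest).Infinite := hinf'.image (toR_inj.injOn)
    have hsub : toR '' Rest ⊆ Set.Icc (0:ℝ) 1 := by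
      rintro t ⟨a, _, rfl⟩
      exact toR_mem a
    obtain ⟨y, -, hy⟩ := himg.exists_accPt_of_subset_isCompact isCompact_Icc hsub
    have hyF : y ∈ Fa := accPt_mono hy (Set.image_mono Set.diff_subset)
    have h0 : AccPt y (𝓟 (toR '' Rest ∩ Metric.ball y (ρ y))) :=
      accPt_inter_of_nhds hy (Metric.ball_mem_nhds y (hρpos y))
    have hemp : toR '' Rest ∩ Metric.ball y (ρ y) = ∅ := by
      ext t
      simp only [Set.mem_inter_iff, Set.mem_empty_iff_false, iff_false, not_and]
      rintro ⟨a, haR, rfl⟩ hball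
      have h1 : a ∉ Ax y := fun hAy => haR.2 (Set.mem_biUnion hyF hAy)
      have h2 : ¬(|toR a - y| ≤ ρ y) := fun hle => h1 ⟨haR.1, hle⟩
      rw [Metric.mem_ball, Real.dist_eq] at hball
      exact h2 (le_of_lt hball)
    rw [hemp, principal_empty] at h0
    exact h0.ne (by simp)
  have hsub : f ⁻¹' A ⊆ (f ⁻¹' Rest) ∪ ⋃ x ∈ Fa, f ⁻¹' (Ax x) := by
    intro n hn
    by_cases h : f n ∈ ⋃ x ∈ Fa, Ax x
    · right
      rw [Set.mem_iUnion₂] at h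
      obtain ⟨x, hx, hfx⟩ := h
      exact Set.mem_biUnion hx hfx
    · exact Or.inl ⟨hn, h⟩
  have hRestI : f ⁻¹' Rest ∈ I := by
    apply hfin
    exact Set.Finite.preimage
      (Function.Injective.injOn (fun a b hab => qv_injective e (congrArg Subtype.val hab)))
      hRestFin
  have hUnionI : (⋃ x ∈ Fa, f ⁻¹' (Ax x)) ∈ I :=
    ideal_biUnion I hI Fa hS _ (fun x _ => hAxI x)
  exact hI.2.2.2 _ _ hsub (hI.2.2.1 _ _ hRestI hUnionI)

theorem katetov_to_splitting (I : Set (Set ℕ)) (hI : IsIdeal I)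
    (hK : KatetovLE convIdeal I) : CountSplitting I := by
  obtain ⟨f, hf⟩ := hK
  refine ⟨{S | (∃ c : ℚ, S = f ⁻¹' {q : QI | (q : ℚ) < c}) ∧ S.Infinite}, ?_, fun X hX => hX.2, ?_⟩
  · exact (Set.countable_range (fun c : ℚ => f ⁻¹' {q : QI | (q : ℚ) < c})).mono
      (fun S hS => by obtain ⟨c, hc⟩ := hS.1; exact ⟨c, hc.symm⟩)
  · intro Y hY
    have himg : f '' Y ∉ convIdeal := by
      intro h
      exact hY (hI.2.2.2 _ _ (Set.subset_preimage_image f Y) (hf _ h))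
    have hacc : {x : ℝ | AccPt x (𝓟 (toR '' (f '' Y)))}.Infinite := himg
    obtain ⟨x, hx, y, hy, hxy⟩ := hacc.nontrivial
    -- wlog x < y
    have main : ∀ x y : ℝ, AccPt x (𝓟 (toR '' (f '' Y))) → AccPt y (𝓟 (toR '' (f '' Y))) →
        x < y → ∃ X ∈ {S | (∃ c : ℚ, S = f ⁻¹' {q : QI | (q : ℚ) < c}) ∧ S.Infinite},
          (X ∩ Y).Infinite ∧ (Y \ X).Infinite := by
      intro x y hx hy hlt
      obtain ⟨c, hxc, hcy⟩ := exists_rat_btwn hlt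
      set X := f ⁻¹' {q : QI | (q : ℚ) < c} with hXdef
      have hmem : ∀ n, n ∈ X ↔ toR (f n) < (c : ℝ) := by
        intro n
        simp only [hXdef, Set.mem_preimage, Set.mem_setOf_eq, toR]
        exact_mod_cast (Rat.cast_lt (K := ℝ)).symm
      have hXY : (X ∩ Y).Infinite := by
        by_contra hfin'
        rw [Set.not_infinite] at hfin'
        have hfin := hfin'
        have hsub : toR '' (f '' Y) ∩ Set.Iio (c : ℝ) ⊆ toR '' (f '' (X ∩ Y)) := by
          rintro z ⟨⟨q, ⟨n, hn, rfl⟩, rfl⟩, hz⟩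
          exact ⟨f n, ⟨n, ⟨(hmem n).2 hz, hn⟩, rfl⟩, rfl⟩
        have hA := accPt_inter_of_nhds hx (Iio_mem_nhds hxc)
        exact not_accPt_of_finite (((hfin.image f).image toR).subset hsub) x hA
      refine ⟨X, ⟨⟨c, rfl⟩, hXY.mono Set.inter_subset_left⟩, hXY, ?_⟩
      by_contra hfin'
      rw [Set.not_infinite] at hfin'
      have hfin := hfin'
      have hsub : toR '' (f '' Y) ∩ Set.Ioi (c : ℝ) ⊆ toR '' (f '' (Y \ X)) := by
        rintro z ⟨⟨q, ⟨n, hn, rfl⟩, rfl⟩, hz⟩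
        refine ⟨f n, ⟨n, ⟨hn, fun hX => ?_⟩, rfl⟩, rfl⟩
        exact absurd ((hmem n).1 hX) (not_lt.2 (le_of_lt hz))
      have hA := accPt_inter_of_nhds hy (Ioi_mem_nhds hcy)
      exact not_accPt_of_finite (((hfin.image f).image toR).subset hsub) y hA
    rcases lt_or_gt_of_ne hxy with h | h
    · exact main x y hx hy h
    · exact main y x hy hx h

/-- A tall ideal on `ℕ` admits a countable splitting family iff `conv ≤_K I`. -/
theorem splitting_iff_conv_katetov (I : Set (Set ℕ)) (hI : IsIdeal I)
    (hfin : ContainsFin I) (htall : Tall I) :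
    CountSplitting I ↔ KatetovLE convIdeal I := by
  exact ⟨fun h => splitting_to_katetov I hI hfin h, fun h => katetov_to_splitting I hI h⟩
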